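/- For every even integer q ≥ 2, the operator 𝒯 defined on ℱ_{e,Ω} by 𝒯(G)(z,x) = z + z Σ_{d≥1} (1/d!) ∫_{Ω^d} ∏_{i=1}^d [K(x,y_i) G(z,y_i)^{q−1}/(q−1)!] · ∏_{1≤i<j≤d} K(y_i,y_j) dν(y₁)⋯dν(y_d) maps ℱ_{e,Ω} into ℱ_{e,Ω} (in particular the defining series converges absolutely and uniformly), and for all G₁, G₂ ∈ ℱ_{e,Ω} one has ‖𝒯(G₁) − 𝒯(G₂)‖_{e,Ω} ≤ e⁻¹ ‖G₁ − G₂‖_{e,Ω}; that is, 𝒯 is a contraction on ℱ_{e,Ω} with respect to the metric induced by ‖·‖_{e,Ω}. -/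

import Mathlib

open MeasureTheory Filter

noncomputable section

namespace SYK

attribute [local instance] Classical.propDecidable

/-- The chord crossing sign `K(x,y)`. -/
def K (x y : ℝ × ℝ) : ℝ :=
  if (x.1 < y.1 ∧ y.1 < x.2 ∧ x.2 < y.2) ∨ (y.1 < x.1 ∧ x.1 < y.2 ∧ y.2 < x.2) then -1 else 1

lemma K_symm (x y : ℝ × ℝ) : K x y = K y x := if_congr or_comm rfl rfl

/-- The law of `(min U₁ U₂, max U₁ U₂)` for `U₁, U₂` i.i.d. uniform on `[0,1]`. -/
def nu : Measure (ℝ × ℝ) :=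
  Measure.map (fun p : ℝ × ℝ => (min p.1 p.2, max p.1 p.2))
    (volume.restrict (Set.Icc (0 : ℝ) 1 ×ˢ Set.Icc (0 : ℝ) 1))

/-- `Ω = [0,1]²`. -/
def Omega : Set (ℝ × ℝ) := Set.Icc (0 : ℝ) 1 ×ˢ Set.Icc (0 : ℝ) 1

/-- The closed disk `{z : |z| ≤ e⁻²}`. -/
def De : Set ℂ := Metric.closedBall 0 (Real.exp (-2))

/-- Membership in `ℱ_{e,Ω}`: continuous on the domain and bounded by `1` there. -/
def memF (G : ℂ → ℝ × ℝ → ℂ) : Prop :=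
  ContinuousOn (fun p : ℂ × (ℝ × ℝ) => G p.1 p.2) (De ×ˢ Omega) ∧
    ∀ z ∈ De, ∀ x ∈ Omega, ‖G z x‖ ≤ 1

/-- `∏_{1 ≤ i < j ≤ d} K(y_i, y_j)`. -/
def pairProd (d : ℕ) (y : Fin d → ℝ × ℝ) : ℝ :=
  ∏ p ∈ Finset.univ.filter (fun p : Fin d × Fin d => p.1 < p.2), K (y p.1) (y p.2)

/-- The `d`-th term of the series defining the operator `𝒯`. -/
def Tterm (q : ℕ) (G : ℂ → ℝ × ℝ → ℂ) (z : ℂ) (x : ℝ × ℝ) (d : ℕ) : ℂ :=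
  ((d.factorial : ℂ))⁻¹ *
    ∫ y : Fin d → ℝ × ℝ,
      (∏ i, ((K x (y i) : ℂ) * (G z (y i)) ^ (q - 1) / ((q - 1).factorial : ℂ))) *
        (pairProd d y : ℂ) ∂(Measure.pi fun _ => nu)

/-- The operator `𝒯` (Chord-Cavity operator). -/
def Tcal (q : ℕ) (G : ℂ → ℝ × ℝ → ℂ) (z : ℂ) (x : ℝ × ℝ) : ℂ :=
  z + z * ∑' d : ℕ, Tterm q G z x (d + 1)

/-- `H` is a Chord-Cavity-Generator: it lies in `ℱ_{e,Ω}` and satisfies the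
fixed point equation on the domain. -/
def IsCCG (q : ℕ) (H : ℂ → ℝ × ℝ → ℂ) : Prop :=
  memF H ∧ ∀ z ∈ De, ∀ x ∈ Omega, H z x = Tcal q H z x

/-- The supremum norm `‖G‖_{e,Ω} = sup_{|z| ≤ e⁻², x ∈ Ω} |G(z,x)|`. -/
def supNorm (G : ℂ → ℝ × ℝ → ℂ) : ℝ :=
  ⨆ p : De × Omega, ‖G p.1.1 p.2.1‖

-- scratch lemmas
lemma abs_K (x y : ℝ × ℝ) : |K x y| = 1 := by
  unfold K; split <;> simp

lemma norm_K_complex (x y : ℝ × ℝ) : ‖(K x y : ℂ)‖ = 1 := by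
  rw [Complex.norm_real, Real.norm_eq_abs, abs_K]

lemma abs_pairProd (d : ℕ) (y : Fin d → ℝ × ℝ) : |pairProd d y| = 1 := by
  unfold pairProd
  rw [Finset.abs_prod]
  exact Finset.prod_eq_one fun p _ => abs_K _ _

lemma measurable_mm : Measurable (fun p : ℝ × ℝ => (min p.1 p.2, max p.1 p.2)) := by
  fun_prop

lemma nu_apply {A : Set (ℝ × ℝ)} (hA : MeasurableSet A) :
    nu A = volume ((fun p : ℝ × ℝ => (min p.1 p.2, max p.1 p.2)) ⁻¹' A ∩ (Set.Icc (0:ℝ) 1 ×ˢ Set.Icc (0:ℝ) 1)) := by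
  rw [nu, Measure.map_apply measurable_mm hA, Measure.restrict_apply]
  exact measurable_mm hA

instance : IsProbabilityMeasure nu := by
  constructor
  rw [nu_apply MeasurableSet.univ, Set.preimage_univ, Set.univ_inter,
    Measure.volume_eq_prod, Measure.prod_prod, Real.volume_Icc]
  norm_num

lemma measurableSet_Omega : MeasurableSet Omega :=
  (measurableSet_Icc.prod measurableSet_Icc)

lemma nu_compl_Omega : nu Omegaᶜ = 0 := by
  rw [nu_apply measurableSet_Omega.compl]
  convert measure_empty (μ := (volume : Measure (ℝ × ℝ)))
  ext p
  simp only [Set.mem_inter_iff, Set.mem_preimage, Set.mem_compl_iff, Set.mem_empty_iff_false,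
    iff_false, not_and]
  intro hm hp
  apply hm
  obtain ⟨⟨h1, h2⟩, h3, h4⟩ := hp
  exact ⟨⟨le_min h1 h3, min_le_of_left_le h2⟩, ⟨le_max_of_le_left h1, max_le h2 h4⟩⟩

lemma ae_nu_mem_Omega : ∀ᵐ w ∂nu, w ∈ Omega := by
  rw [MeasureTheory.ae_iff]
  exact nu_compl_Omega

lemma nu_fst_eq (c : ℝ) : nu {w : ℝ × ℝ | w.1 = c} = 0 := by
  have hA : MeasurableSet {w : ℝ × ℝ | w.1 = c} :=
    (measurable_fst (measurableSet_singleton c))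
  rw [nu_apply hA]
  refine measure_mono_null (t := ({c} ×ˢ (Set.univ : Set ℝ)) ∪ ((Set.univ : Set ℝ) ×ˢ {c})) ?_ ?_
  · intro p ⟨hp, _⟩
    simp only [Set.mem_preimage, Set.mem_setOf_eq] at hp
    rcases min_eq_iff.mp hp with ⟨h, _⟩ | ⟨h, _⟩
    · exact Or.inl ⟨h, trivial⟩
    · exact Or.inr ⟨trivial, h⟩
  · refine measure_union_null ?_ ?_ <;>
      rw [Measure.volume_eq_prod, Measure.prod_prod] <;> simp

lemma nu_snd_eq (c : ℝ) : nu {w : ℝ × ℝ | w.2 = c} = 0 := by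
  have hA : MeasurableSet {w : ℝ × ℝ | w.2 = c} :=
    (measurable_snd (measurableSet_singleton c))
  rw [nu_apply hA]
  refine measure_mono_null (t := ({c} ×ˢ (Set.univ : Set ℝ)) ∪ ((Set.univ : Set ℝ) ×ˢ {c})) ?_ ?_
  · intro p ⟨hp, _⟩
    simp only [Set.mem_preimage, Set.mem_setOf_eq] at hp
    rcases max_eq_iff.mp hp with ⟨h, _⟩ | ⟨h, _⟩
    · exact Or.inl ⟨h, trivial⟩
    · exact Or.inr ⟨trivial, h⟩
  · refine measure_union_null ?_ ?_ <;>
      rw [Measure.volume_eq_prod, Measure.prod_prod] <;> simp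

lemma measurable_K_uncurried : Measurable (fun p : (ℝ × ℝ) × (ℝ × ℝ) => K p.1 p.2) := by
  unfold K
  refine Measurable.ite ?_ measurable_const measurable_const
  rw [Set.setOf_or]
  refine MeasurableSet.union ?_ ?_ <;>
  · rw [Set.setOf_and, Set.setOf_and]
    refine MeasurableSet.inter ?_ (MeasurableSet.inter ?_ ?_) <;>
      exact measurableSet_lt (by fun_prop) (by fun_prop)

lemma ae_pi_mem_Omega (d : ℕ) :
    ∀ᵐ y ∂(Measure.pi fun _ : Fin d => nu), ∀ i, y i ∈ Omega := by
  rw [MeasureTheory.ae_all_iff]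
  exact fun i => Measure.tendsto_eval_ae_ae.eventually ae_nu_mem_Omega

lemma factor_norm_le {q : ℕ} {G : ℂ → ℝ × ℝ → ℂ} {z : ℂ} {x w : ℝ × ℝ}
    (hG : ‖G z w‖ ≤ 1) :
    ‖(K x w : ℂ) * (G z w) ^ (q - 1) / ((q - 1).factorial : ℂ)‖ ≤ 1 := by
  rw [norm_div, norm_mul, norm_K_complex, one_mul, norm_pow]
  rw [Complex.norm_natCast]
  have h1 : ‖G z w‖ ^ (q - 1) ≤ 1 := pow_le_one₀ (norm_nonneg _) hG
  have h2 : (1 : ℝ) ≤ ((q - 1).factorial : ℝ) := Nat.one_le_cast.mpr (q-1).factorial_pos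
  calc ‖G z w‖ ^ (q-1) / ((q-1).factorial : ℝ) ≤ 1 / 1 :=
        div_le_div₀ (by norm_num) h1 (by norm_num) h2
    _ = 1 := by norm_num

lemma pow_sub_pow_norm_le {a b : ℂ} (ha : ‖a‖ ≤ 1) (hb : ‖b‖ ≤ 1) (n : ℕ) :
    ‖a ^ n - b ^ n‖ ≤ n * ‖a - b‖ := by
  induction n with
  | zero => simp
  | succ n ih =>
    have : a ^ (n+1) - b ^ (n+1) = a * (a ^ n - b ^ n) + (a - b) * b ^ n := by ring
    rw [this]
    calc ‖a * (a^n - b^n) + (a-b) * b^n‖ ≤ ‖a * (a^n - b^n)‖ + ‖(a-b) * b^n‖ := norm_add_le _ _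
      _ = ‖a‖ * ‖a^n - b^n‖ + ‖a-b‖ * ‖b^n‖ := by rw [norm_mul, norm_mul]
      _ ≤ 1 * (n * ‖a-b‖) + ‖a-b‖ * 1 := by
          refine add_le_add (mul_le_mul ha ih (norm_nonneg _) one_pos.le) ?_
          refine mul_le_mul_of_nonneg_left ?_ (norm_nonneg _)
          rw [norm_pow]; exact pow_le_one₀ (norm_nonneg _) hb
      _ = ((n + 1 : ℕ) : ℝ) * ‖a - b‖ := by push_cast; ring

lemma prod_sub_prod_norm_le {ι : Type*} (s : Finset ι) (a b : ι → ℂ) (ε : ℝ) (hε : 0 ≤ ε)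
    (ha : ∀ i ∈ s, ‖a i‖ ≤ 1) (hb : ∀ i ∈ s, ‖b i‖ ≤ 1) (hab : ∀ i ∈ s, ‖a i - b i‖ ≤ ε) :
    ‖∏ i ∈ s, a i - ∏ i ∈ s, b i‖ ≤ s.card * ε := by
  classical
  revert ha hb hab
  induction s using Finset.cons_induction with
  | empty => intro _ _ _; simp
  | cons j s' hj ih =>
    intro ha hb hab
    rw [Finset.prod_cons, Finset.prod_cons]
    have hmem : ∀ i ∈ s', i ∈ Finset.cons j s' hj := fun i hi => Finset.mem_cons_of_mem hi
    have key : a j * ∏ i ∈ s', a i - b j * ∏ i ∈ s', b i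
        = a j * (∏ i ∈ s', a i - ∏ i ∈ s', b i) + (a j - b j) * ∏ i ∈ s', b i := by ring
    rw [key, Finset.card_cons]
    have hpb : ‖∏ i ∈ s', b i‖ ≤ 1 := by
      rw [norm_prod]
      exact Finset.prod_le_one (fun i _ => norm_nonneg _) (fun i hi => hb i (hmem i hi))
    calc ‖a j * (∏ i ∈ s', a i - ∏ i ∈ s', b i) + (a j - b j) * ∏ i ∈ s', b i‖
        ≤ ‖a j‖ * ‖∏ i ∈ s', a i - ∏ i ∈ s', b i‖ + ‖a j - b j‖ * ‖∏ i ∈ s', b i‖ := by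
          refine (norm_add_le _ _).trans ?_
          rw [norm_mul, norm_mul]
      _ ≤ 1 * (s'.card * ε) + ε * 1 := by
          refine add_le_add (mul_le_mul (ha j (Finset.mem_cons_self j s'))
            (ih (fun i hi => ha i (hmem i hi)) (fun i hi => hb i (hmem i hi))
              (fun i hi => hab i (hmem i hi)))
            (norm_nonneg _) one_pos.le) ?_
          exact mul_le_mul (hab j (Finset.mem_cons_self j s')) hpb (norm_nonneg _) hε
      _ = ((s'.card + 1 : ℕ) : ℝ) * ε := by push_cast; ring

/-- the integrand of `Tterm`. -/
def integrand (q : ℕ) (G : ℂ → ℝ × ℝ → ℂ) (z : ℂ) (x : ℝ × ℝ) (d : ℕ)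
    (y : Fin d → ℝ × ℝ) : ℂ :=
  (∏ i, ((K x (y i) : ℂ) * (G z (y i)) ^ (q - 1) / ((q - 1).factorial : ℂ))) *
    (pairProd d y : ℂ)

lemma Tterm_eq (q : ℕ) (G : ℂ → ℝ × ℝ → ℂ) (z : ℂ) (x : ℝ × ℝ) (d : ℕ) :
    Tterm q G z x d = ((d.factorial : ℂ))⁻¹ *
      ∫ y : Fin d → ℝ × ℝ, integrand q G z x d y ∂(Measure.pi fun _ => nu) := rfl

lemma aesm_G_comp {G : ℂ → ℝ × ℝ → ℂ}
    (hGc : ContinuousOn (fun p : ℂ × (ℝ × ℝ) => G p.1 p.2) (De ×ˢ Omega))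
    {z : ℂ} (hz : z ∈ De) {d : ℕ} (i : Fin d) :
    AEStronglyMeasurable (fun y : Fin d → ℝ × ℝ => G z (y i))
      (Measure.pi fun _ : Fin d => nu) := by
  have hGz : ContinuousOn (fun w => G z w) Omega := by
    intro w hw
    exact (hGc (z, w) ⟨hz, hw⟩).comp
      (Continuous.continuousWithinAt (by fun_prop)) (fun w' hw' => ⟨hz, hw'⟩)
  have hGnu : AEStronglyMeasurable (fun w => G z w) nu := by
    have := hGz.aestronglyMeasurable (μ := nu) measurableSet_Omega
    rwa [Measure.restrict_eq_self_of_ae_mem ae_nu_mem_Omega] at this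
  obtain ⟨g, hg, hgg⟩ := hGnu
  refine ⟨fun y => g (y i), hg.comp_measurable (measurable_pi_apply i), ?_⟩
  exact (Measure.tendsto_eval_ae_ae (μ := fun _ : Fin d => nu) (i := i)).eventually hgg

lemma measurable_K_eval (x : ℝ × ℝ) {d : ℕ} (i : Fin d) :
    Measurable (fun y : Fin d → ℝ × ℝ => K x (y i)) :=
  measurable_K_uncurried.comp (measurable_const.prodMk (measurable_pi_apply i))

lemma measurable_pairProd (d : ℕ) : Measurable (pairProd d) := by
  unfold pairProd
  refine Finset.measurable_prod _ (fun p _ => ?_)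
  have h : (fun y : Fin d → ℝ × ℝ => K (y p.1) (y p.2)) =
      (fun w : (ℝ × ℝ) × (ℝ × ℝ) => K w.1 w.2) ∘ (fun y => (y p.1, y p.2)) := rfl
  rw [h]
  exact measurable_K_uncurried.comp ((measurable_pi_apply p.1).prodMk (measurable_pi_apply p.2))

lemma aesm_integrand {q : ℕ} {G : ℂ → ℝ × ℝ → ℂ}
    (hGc : ContinuousOn (fun p : ℂ × (ℝ × ℝ) => G p.1 p.2) (De ×ˢ Omega))
    {z : ℂ} (hz : z ∈ De) (x : ℝ × ℝ) (d : ℕ) :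
    AEStronglyMeasurable (integrand q G z x d) (Measure.pi fun _ : Fin d => nu) := by
  refine AEStronglyMeasurable.mul ?_ ?_
  · refine Finset.aestronglyMeasurable_fun_prod _ (fun i _ => ?_)
    have hrw : (fun y : Fin d → ℝ × ℝ =>
        (K x (y i) : ℂ) * (G z (y i)) ^ (q - 1) / ((q - 1).factorial : ℂ))
        = fun y => ((K x (y i) : ℂ) * (G z (y i)) ^ (q - 1)) * (((q - 1).factorial : ℂ))⁻¹ := by
      funext y; rw [div_eq_mul_inv]
    rw [hrw]
    exact (((Complex.measurable_ofReal.comp (measurable_K_eval x i)).aestronglyMeasurable).mul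
      ((aesm_G_comp hGc hz i).pow _)).mul aestronglyMeasurable_const
  · exact (Complex.measurable_ofReal.comp (measurable_pairProd d)).aestronglyMeasurable

lemma norm_integrand_le {q : ℕ} {G : ℂ → ℝ × ℝ → ℂ}
    (hG1 : ∀ z ∈ De, ∀ x ∈ Omega, ‖G z x‖ ≤ 1)
    {z : ℂ} (hz : z ∈ De) (x : ℝ × ℝ) {d : ℕ} {y : Fin d → ℝ × ℝ}
    (hy : ∀ i, y i ∈ Omega) : ‖integrand q G z x d y‖ ≤ 1 := by
  unfold integrand
  rw [norm_mul, Complex.norm_real, Real.norm_eq_abs, abs_pairProd, mul_one, norm_prod]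
  refine Finset.prod_le_one (fun i _ => norm_nonneg _) (fun i _ => ?_)
  exact factor_norm_le (hG1 z hz (y i) (hy i))

lemma ae_norm_integrand_le {q : ℕ} {G : ℂ → ℝ × ℝ → ℂ}
    (hG1 : ∀ z ∈ De, ∀ x ∈ Omega, ‖G z x‖ ≤ 1)
    {z : ℂ} (hz : z ∈ De) (x : ℝ × ℝ) (d : ℕ) :
    ∀ᵐ y ∂(Measure.pi fun _ : Fin d => nu), ‖integrand q G z x d y‖ ≤ 1 := by
  filter_upwards [ae_pi_mem_Omega d] with y hy
  exact norm_integrand_le hG1 hz x hy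

lemma integrable_integrand {q : ℕ} {G : ℂ → ℝ × ℝ → ℂ} (hG : memF G)
    {z : ℂ} (hz : z ∈ De) (x : ℝ × ℝ) (d : ℕ) :
    Integrable (integrand q G z x d) (Measure.pi fun _ : Fin d => nu) := by
  refine Integrable.mono' (integrable_const 1) (aesm_integrand hG.1 hz x d) ?_
  exact ae_norm_integrand_le hG.2 hz x d

lemma Tterm_norm_le {q : ℕ} {G : ℂ → ℝ × ℝ → ℂ}
    (hG1 : ∀ z ∈ De, ∀ x ∈ Omega, ‖G z x‖ ≤ 1)
    {z : ℂ} (hz : z ∈ De) (x : ℝ × ℝ) (d : ℕ) :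
    ‖Tterm q G z x d‖ ≤ ((d.factorial : ℝ))⁻¹ := by
  rw [Tterm_eq, norm_mul, norm_inv, Complex.norm_natCast]
  have h := norm_integral_le_of_norm_le_const (f := integrand q G z x d)
    (μ := Measure.pi fun _ : Fin d => nu)
    (C := 1) (ae_norm_integrand_le (q := q) hG1 hz x d)
  rw [probReal_univ, mul_one] at h
  calc ((d.factorial : ℝ))⁻¹ * ‖∫ y, integrand q G z x d y ∂(Measure.pi fun _ : Fin d => nu)‖
      ≤ ((d.factorial : ℝ))⁻¹ * 1 := by
        refine mul_le_mul_of_nonneg_left h (by positivity)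
    _ = ((d.factorial : ℝ))⁻¹ := mul_one _

lemma factor_sub_norm_le {q : ℕ} {G₁ G₂ : ℂ → ℝ × ℝ → ℂ} {C : ℝ}
    {z : ℂ} {x w : ℝ × ℝ}
    (h1 : ‖G₁ z w‖ ≤ 1) (h2 : ‖G₂ z w‖ ≤ 1) (hδ : ‖G₁ z w - G₂ z w‖ ≤ C) :
    ‖(K x w : ℂ) * (G₁ z w) ^ (q - 1) / ((q - 1).factorial : ℂ)
      - (K x w : ℂ) * (G₂ z w) ^ (q - 1) / ((q - 1).factorial : ℂ)‖ ≤ C := by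
  have hrw : (K x w : ℂ) * (G₁ z w) ^ (q - 1) / ((q - 1).factorial : ℂ)
      - (K x w : ℂ) * (G₂ z w) ^ (q - 1) / ((q - 1).factorial : ℂ)
      = (K x w : ℂ) * ((G₁ z w) ^ (q - 1) - (G₂ z w) ^ (q - 1)) / ((q - 1).factorial : ℂ) := by
    ring
  rw [hrw, norm_div, norm_mul, norm_K_complex, one_mul, Complex.norm_natCast]
  have hfac : (1 : ℝ) ≤ ((q - 1).factorial : ℝ) := Nat.one_le_cast.mpr (q-1).factorial_pos
  have hpow := pow_sub_pow_norm_le h1 h2 (q - 1)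
  have hself : ((q - 1 : ℕ) : ℝ) ≤ ((q - 1).factorial : ℝ) :=
    Nat.cast_le.mpr (q - 1).self_le_factorial
  have hC0 : (0:ℝ) ≤ C := le_trans (norm_nonneg _) hδ
  calc ‖(G₁ z w) ^ (q-1) - (G₂ z w) ^ (q-1)‖ / ((q - 1).factorial : ℝ)
      ≤ (((q-1 : ℕ) : ℝ) * ‖G₁ z w - G₂ z w‖) / ((q - 1).factorial : ℝ) := by
        have hpos : (0:ℝ) < ((q - 1).factorial : ℝ) := by linarith
        gcongr
    _ ≤ (((q - 1).factorial : ℝ) * C) / ((q - 1).factorial : ℝ) := by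
        have hpos : (0:ℝ) < ((q - 1).factorial : ℝ) := by linarith
        gcongr
    _ = C := by field_simp

lemma Tterm_sub_norm_le {q : ℕ} {G₁ G₂ : ℂ → ℝ × ℝ → ℂ}
    (hG₁ : memF G₁) (hG₂ : memF G₂) {C : ℝ} (hC0 : 0 ≤ C)
    (hC : ∀ z ∈ De, ∀ w ∈ Omega, ‖G₁ z w - G₂ z w‖ ≤ C)
    {z : ℂ} (hz : z ∈ De) (x : ℝ × ℝ) (d : ℕ) :
    ‖Tterm q G₁ z x d - Tterm q G₂ z x d‖ ≤ ((d.factorial : ℝ))⁻¹ * (d * C) := by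
  rw [Tterm_eq, Tterm_eq, ← mul_sub,
    ← integral_sub (integrable_integrand hG₁ hz x d) (integrable_integrand hG₂ hz x d),
    norm_mul, norm_inv, Complex.norm_natCast]
  have hae : ∀ᵐ y ∂(Measure.pi fun _ : Fin d => nu),
      ‖integrand q G₁ z x d y - integrand q G₂ z x d y‖ ≤ d * C := by
    filter_upwards [ae_pi_mem_Omega d] with y hy
    unfold integrand
    rw [← sub_mul, norm_mul, Complex.norm_real, Real.norm_eq_abs, abs_pairProd, mul_one]
    have := prod_sub_prod_norm_le Finset.univ
      (fun i => (K x (y i) : ℂ) * (G₁ z (y i)) ^ (q - 1) / ((q - 1).factorial : ℂ))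
      (fun i => (K x (y i) : ℂ) * (G₂ z (y i)) ^ (q - 1) / ((q - 1).factorial : ℂ)) C hC0
      (fun i _ => factor_norm_le (hG₁.2 z hz (y i) (hy i)))
      (fun i _ => factor_norm_le (hG₂.2 z hz (y i) (hy i)))
      (fun i _ => factor_sub_norm_le (hG₁.2 z hz (y i) (hy i)) (hG₂.2 z hz (y i) (hy i))
        (hC z hz (y i) (hy i)))
    simpa [Finset.card_univ] using this
  have h := norm_integral_le_of_norm_le_const
    (f := fun y => integrand q G₁ z x d y - integrand q G₂ z x d y)
    (μ := Measure.pi fun _ : Fin d => nu) (C := d * C) hae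
  rw [probReal_univ, mul_one] at h
  exact mul_le_mul_of_nonneg_left h (by positivity)

lemma eventually_cmp {α : Type*} {f : α → ℝ} {l : Filter α} {a c : ℝ}
    (hf : Tendsto f l (nhds a)) (h : a ≠ c) :
    ∀ᶠ x in l, ((f x < c) ↔ (a < c)) ∧ ((c < f x) ↔ (c < a)) := by
  rcases h.lt_or_gt with hlt | hlt
  · filter_upwards [hf.eventually_lt_const hlt] with x hx
    exact ⟨iff_of_true hx hlt, iff_of_false (by linarith) (by linarith)⟩
  · filter_upwards [hf.eventually_const_lt hlt] with x hx
    exact ⟨iff_of_false (by linarith) (by linarith), iff_of_true hx hlt⟩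

lemma K_eventually_const {x₀ w : ℝ × ℝ}
    (h1 : w.1 ≠ x₀.1) (h2 : w.1 ≠ x₀.2) (h3 : w.2 ≠ x₀.1) (h4 : w.2 ≠ x₀.2) :
    ∀ᶠ x in nhds x₀, K x w = K x₀ w := by
  have e1 := eventually_cmp (f := fun x : ℝ × ℝ => x.1) (continuous_fst.tendsto x₀) h1.symm
  have e2 := eventually_cmp (f := fun x : ℝ × ℝ => x.2) (continuous_snd.tendsto x₀) h2.symm
  have e3 := eventually_cmp (f := fun x : ℝ × ℝ => x.1) (continuous_fst.tendsto x₀) h3.symm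
  have e4 := eventually_cmp (f := fun x : ℝ × ℝ => x.2) (continuous_snd.tendsto x₀) h4.symm
  filter_upwards [e1, e2, e3, e4] with x hx1 hx2 hx3 hx4
  unfold K
  refine if_congr ?_ rfl rfl
  rw [hx1.1, hx2.2, hx4.1, hx1.2, hx3.1, hx4.2]

lemma ae_nu_ne (c : ℝ) : ∀ᵐ w ∂nu, w.1 ≠ c ∧ w.2 ≠ c := by
  rw [MeasureTheory.ae_iff]
  refine measure_mono_null (t := {w : ℝ × ℝ | w.1 = c} ∪ {w : ℝ × ℝ | w.2 = c}) ?_ ?_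
  · intro w hw
    simp only [Set.mem_setOf_eq, not_and_or, not_not] at hw
    exact hw
  · exact measure_union_null (nu_fst_eq c) (nu_snd_eq c)

lemma Tterm_continuousOn (q : ℕ) {G : ℂ → ℝ × ℝ → ℂ} (hG : memF G) (d : ℕ) :
    ContinuousOn (fun p : ℂ × (ℝ × ℝ) => Tterm q G p.1 p.2 d) (De ×ˢ Omega) := by
  intro p₀ hp₀
  rw [Set.mem_prod] at hp₀
  have hz₀ : p₀.1 ∈ De := hp₀.1
  have hx₀ : p₀.2 ∈ Omega := hp₀.2
  rw [ContinuousWithinAt]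
  simp only [Tterm_eq]
  refine Tendsto.const_mul _ ?_
  refine tendsto_integral_filter_of_dominated_convergence (F := fun p : ℂ × (ℝ × ℝ) =>
      integrand q G p.1 p.2 d) (bound := fun _ => (1 : ℝ)) ?_ ?_ (integrable_const 1) ?_
  · filter_upwards [self_mem_nhdsWithin] with p hp
    rw [Set.mem_prod] at hp
    exact aesm_integrand hG.1 hp.1 p.2 d
  · filter_upwards [self_mem_nhdsWithin] with p hp
    rw [Set.mem_prod] at hp
    exact ae_norm_integrand_le hG.2 hp.1 p.2 d
  · have hgood : ∀ᵐ y ∂(Measure.pi fun _ : Fin d => nu), ∀ i : Fin d,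
        ((y i).1 ≠ p₀.2.1 ∧ (y i).2 ≠ p₀.2.1) ∧ ((y i).1 ≠ p₀.2.2 ∧ (y i).2 ≠ p₀.2.2) := by
      rw [MeasureTheory.ae_all_iff]
      intro i
      exact (Measure.tendsto_eval_ae_ae (μ := fun _ : Fin d => nu) (i := i)).eventually
        ((ae_nu_ne p₀.2.1).and (ae_nu_ne p₀.2.2))
    filter_upwards [ae_pi_mem_Omega d, hgood] with y hy hygood
    unfold integrand
    refine Tendsto.mul_const _ ?_
    refine tendsto_finset_prod _ (fun i _ => ?_)
    have hsnd : Tendsto (fun p : ℂ × (ℝ × ℝ) => p.2) (nhdsWithin p₀ (De ×ˢ Omega)) (nhds p₀.2) :=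
      (continuous_snd.tendsto p₀).mono_left nhdsWithin_le_nhds
    have hK : Tendsto (fun p : ℂ × (ℝ × ℝ) => ((K p.2 (y i) : ℝ) : ℂ))
        (nhdsWithin p₀ (De ×ˢ Omega)) (nhds ((K p₀.2 (y i) : ℝ) : ℂ)) := by
      have hev := hsnd.eventually (K_eventually_const (x₀ := p₀.2) (w := y i)
        (hygood i).1.1 (hygood i).2.1 (hygood i).1.2 (hygood i).2.2)
      refine Tendsto.congr' ?_ tendsto_const_nhds
      filter_upwards [hev] with p hp
      exact congrArg Complex.ofReal hp.symm
    have hGt : Tendsto (fun p : ℂ × (ℝ × ℝ) => G p.1 (y i))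
        (nhdsWithin p₀ (De ×ˢ Omega)) (nhds (G p₀.1 (y i))) := by
      have hcw : ContinuousWithinAt (fun p : ℂ × (ℝ × ℝ) => (p.1, y i))
          (De ×ˢ Omega) p₀ := (Continuous.continuousWithinAt (by fun_prop))
      have hmaps : Set.MapsTo (fun p : ℂ × (ℝ × ℝ) => (p.1, y i))
          (De ×ˢ Omega) (De ×ˢ Omega) := by
        intro p hp
        rw [Set.mem_prod] at hp ⊢
        exact ⟨hp.1, hy i⟩
      exact ContinuousWithinAt.comp (g := fun p : ℂ × (ℝ × ℝ) => G p.1 p.2)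
        (f := fun p : ℂ × (ℝ × ℝ) => (p.1, y i))
        (hG.1 (p₀.1, y i) ⟨hz₀, hy i⟩) hcw hmaps
    exact (hK.mul (hGt.pow _)).div_const _

lemma summable_inv_factorial : Summable (fun d : ℕ => ((d.factorial : ℝ))⁻¹) := by
  have h := NormedSpace.expSeries_div_summable (1 : ℝ)
  simpa [one_div] using h

lemma tsum_inv_factorial : ∑' d : ℕ, ((d.factorial : ℝ))⁻¹ = Real.exp 1 := by
  have h := congrFun (NormedSpace.exp_eq_tsum_div (𝔸 := ℝ)) 1
  rw [Real.exp_eq_exp_ℝ]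
  rw [h]
  congr 1
  funext n
  rw [one_pow, one_div]

lemma summable_inv_factorial_succ : Summable (fun d : ℕ => (((d+1).factorial : ℝ))⁻¹) :=
  (summable_nat_add_iff 1).2 summable_inv_factorial

lemma tsum_inv_factorial_succ : ∑' d : ℕ, (((d+1).factorial : ℝ))⁻¹ = Real.exp 1 - 1 := by
  have h := Summable.tsum_eq_zero_add summable_inv_factorial
  rw [tsum_inv_factorial] at h
  simp only [Nat.factorial_zero, Nat.cast_one, inv_one] at h
  linarith [h]

lemma norm_z_le {z : ℂ} (hz : z ∈ De) : ‖z‖ ≤ Real.exp (-2) := by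
  rwa [De, Metric.mem_closedBall, dist_zero_right] at hz

lemma summable_Tterm {q : ℕ} {G : ℂ → ℝ × ℝ → ℂ}
    (hG1 : ∀ z ∈ De, ∀ x ∈ Omega, ‖G z x‖ ≤ 1) {z : ℂ} (hz : z ∈ De) (x : ℝ × ℝ) :
    Summable (fun d : ℕ => Tterm q G z x (d + 1)) :=
  Summable.of_norm_bounded summable_inv_factorial_succ
    (fun d => Tterm_norm_le hG1 hz x (d + 1))

lemma norm_tsum_Tterm_le {q : ℕ} {G : ℂ → ℝ × ℝ → ℂ}
    (hG1 : ∀ z ∈ De, ∀ x ∈ Omega, ‖G z x‖ ≤ 1) {z : ℂ} (hz : z ∈ De) (x : ℝ × ℝ) :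
    ‖∑' d : ℕ, Tterm q G z x (d + 1)‖ ≤ Real.exp 1 - 1 := by
  have hsn : Summable (fun d : ℕ => ‖Tterm q G z x (d + 1)‖) :=
    Summable.of_nonneg_of_le (fun d => norm_nonneg _)
      (fun d => Tterm_norm_le hG1 hz x (d + 1)) summable_inv_factorial_succ
  calc ‖∑' d : ℕ, Tterm q G z x (d + 1)‖ ≤ ∑' d : ℕ, ‖Tterm q G z x (d + 1)‖ :=
        norm_tsum_le_tsum_norm hsn
    _ ≤ ∑' d : ℕ, (((d+1).factorial : ℝ))⁻¹ :=
        Summable.tsum_le_tsum (fun d => Tterm_norm_le hG1 hz x (d + 1)) hsn summable_inv_factorial_succ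
    _ = Real.exp 1 - 1 := tsum_inv_factorial_succ

lemma Tcal_memF {q : ℕ} {G : ℂ → ℝ × ℝ → ℂ} (hG : memF G) : memF (Tcal q G) := by
  constructor
  · have h1 : ContinuousOn (fun p : ℂ × (ℝ × ℝ) => ∑' d : ℕ, Tterm q G p.1 p.2 (d + 1))
        (De ×ˢ Omega) := by
      refine continuousOn_tsum (fun d => Tterm_continuousOn q hG (d + 1))
        summable_inv_factorial_succ (fun d p hp => ?_)
      rw [Set.mem_prod] at hp
      exact Tterm_norm_le hG.2 hp.1 p.2 (d + 1)
    simp only [Tcal]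
    exact (continuousOn_fst.add (continuousOn_fst.mul h1))
  · intro z hz x hx
    rw [Tcal]
    have hz2 : ‖z‖ ≤ Real.exp (-2) := norm_z_le hz
    have h2 := norm_tsum_Tterm_le (q := q) hG.2 hz x
    have he1 : (1 : ℝ) ≤ Real.exp 1 := by
      have := Real.add_one_le_exp 1; linarith
    calc ‖z + z * ∑' d : ℕ, Tterm q G z x (d + 1)‖
        ≤ ‖z‖ + ‖z‖ * ‖∑' d : ℕ, Tterm q G z x (d + 1)‖ := by
          refine (norm_add_le _ _).trans ?_
          rw [norm_mul]
      _ ≤ Real.exp (-2) + Real.exp (-2) * (Real.exp 1 - 1) := by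
          refine add_le_add hz2 ?_
          exact mul_le_mul hz2 h2 (norm_nonneg _) (Real.exp_pos _).le
      _ = Real.exp (-2) * Real.exp 1 := by ring
      _ = Real.exp (-1) := by rw [← Real.exp_add]; norm_num
      _ ≤ 1 := Real.exp_le_one_iff.mpr (by norm_num)

lemma Tcal_pointwise_contraction {q : ℕ} {G₁ G₂ : ℂ → ℝ × ℝ → ℂ}
    (hG₁ : memF G₁) (hG₂ : memF G₂) {C : ℝ} (hC0 : 0 ≤ C)
    (hC : ∀ z ∈ De, ∀ w ∈ Omega, ‖G₁ z w - G₂ z w‖ ≤ C)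
    {z : ℂ} (hz : z ∈ De) (x : ℝ × ℝ) :
    ‖Tcal q G₁ z x - Tcal q G₂ z x‖ ≤ (Real.exp 1)⁻¹ * C := by
  have hb : ∀ d : ℕ, ‖Tterm q G₁ z x (d + 1) - Tterm q G₂ z x (d + 1)‖
      ≤ C * ((d.factorial : ℝ))⁻¹ := by
    intro d
    have h := Tterm_sub_norm_le (q := q) hG₁ hG₂ hC0 hC hz x (d + 1)
    have heq : (((d+1).factorial : ℝ))⁻¹ * ((d + 1 : ℕ) * C) = C * ((d.factorial : ℝ))⁻¹ := by
      rw [Nat.factorial_succ]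
      push_cast
      have h1 : (0:ℝ) < (d : ℝ) + 1 := by positivity
      have h2 : (0:ℝ) < (d.factorial : ℝ) := by exact_mod_cast d.factorial_pos
      field_simp
    rw [heq] at h
    exact h
  have hsb : Summable (fun d : ℕ => C * ((d.factorial : ℝ))⁻¹) :=
    summable_inv_factorial.mul_left C
  have hsn : Summable (fun d : ℕ => ‖Tterm q G₁ z x (d + 1) - Tterm q G₂ z x (d + 1)‖) :=
    Summable.of_nonneg_of_le (fun d => norm_nonneg _) hb hsb
  have hdiff : Tcal q G₁ z x - Tcal q G₂ z x
      = z * ∑' d : ℕ, (Tterm q G₁ z x (d + 1) - Tterm q G₂ z x (d + 1)) := by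
    rw [Tcal, Tcal, Summable.tsum_sub (summable_Tterm hG₁.2 hz x) (summable_Tterm hG₂.2 hz x)]
    ring
  rw [hdiff, norm_mul]
  have hts : ‖∑' d : ℕ, (Tterm q G₁ z x (d + 1) - Tterm q G₂ z x (d + 1))‖
      ≤ C * Real.exp 1 := by
    calc ‖∑' d : ℕ, (Tterm q G₁ z x (d + 1) - Tterm q G₂ z x (d + 1))‖
        ≤ ∑' d : ℕ, ‖Tterm q G₁ z x (d + 1) - Tterm q G₂ z x (d + 1)‖ :=
          norm_tsum_le_tsum_norm hsn
      _ ≤ ∑' d : ℕ, C * ((d.factorial : ℝ))⁻¹ := Summable.tsum_le_tsum hb hsn hsb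
      _ = C * Real.exp 1 := by rw [tsum_mul_left, tsum_inv_factorial]
  calc ‖z‖ * ‖∑' d : ℕ, (Tterm q G₁ z x (d + 1) - Tterm q G₂ z x (d + 1))‖
      ≤ Real.exp (-2) * (C * Real.exp 1) := by
        refine mul_le_mul (norm_z_le hz) hts (norm_nonneg _) (Real.exp_pos _).le
    _ = (Real.exp 1)⁻¹ * C := by
        rw [← Real.exp_neg]
        rw [show Real.exp (-2) * (C * Real.exp 1) = (Real.exp (-2) * Real.exp 1) * C by ring,
          ← Real.exp_add]
        norm_num

/-- The operator `𝒯` maps `ℱ_{e,Ω}` into itself (its defining series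
converging absolutely and uniformly, by a summable uniform bound on the terms), and it
is a contraction with constant `e⁻¹` for the norm `‖·‖_{e,Ω}`. -/
theorem Tcal_contraction (q : ℕ) (hq : Even q) (hq2 : 2 ≤ q) :
    (∃ u : ℕ → ℝ, Summable u ∧
      ∀ G : ℂ → ℝ × ℝ → ℂ, memF G → ∀ z ∈ De, ∀ x ∈ Omega, ∀ d : ℕ,
        ‖Tterm q G z x (d + 1)‖ ≤ u d) ∧
    (∀ G : ℂ → ℝ × ℝ → ℂ, memF G → memF (Tcal q G)) ∧
    (∀ G₁ G₂ : ℂ → ℝ × ℝ → ℂ, memF G₁ → memF G₂ →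
      supNorm (fun z x => Tcal q G₁ z x - Tcal q G₂ z x)
        ≤ (Real.exp 1)⁻¹ * supNorm (fun z x => G₁ z x - G₂ z x)) := by
  refine ⟨⟨fun d => (((d + 1).factorial : ℝ))⁻¹, summable_inv_factorial_succ, ?_⟩, ?_, ?_⟩
  · intro G hG z hz x hx d
    exact Tterm_norm_le hG.2 hz x (d + 1)
  · intro G hG
    exact Tcal_memF hG
  · intro G₁ G₂ hG₁ hG₂
    haveI : Nonempty De := ⟨⟨0, by
      simp only [De, Metric.mem_closedBall, dist_self]
      exact (Real.exp_pos _).le⟩⟩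
    haveI : Nonempty Omega := ⟨⟨(0, 0), by
      constructor <;> constructor <;> norm_num⟩⟩
    have hbdd : BddAbove (Set.range fun p : De × Omega =>
        ‖G₁ p.1.1 p.2.1 - G₂ p.1.1 p.2.1‖) := by
      refine ⟨2, ?_⟩
      rintro r ⟨p, rfl⟩
      calc ‖G₁ p.1.1 p.2.1 - G₂ p.1.1 p.2.1‖ ≤ ‖G₁ p.1.1 p.2.1‖ + ‖G₂ p.1.1 p.2.1‖ :=
            norm_sub_le _ _
        _ ≤ 1 + 1 := add_le_add (hG₁.2 _ p.1.2 _ p.2.2) (hG₂.2 _ p.1.2 _ p.2.2)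
        _ = 2 := by norm_num
    have hC0 : 0 ≤ supNorm (fun z x => G₁ z x - G₂ z x) :=
      Real.iSup_nonneg (fun p => norm_nonneg _)
    have hC : ∀ z ∈ De, ∀ w ∈ Omega, ‖G₁ z w - G₂ z w‖
        ≤ supNorm (fun z x => G₁ z x - G₂ z x) := by
      intro z hz w hw
      exact le_ciSup hbdd (⟨⟨z, hz⟩, ⟨w, hw⟩⟩ : De × Omega)
    rw [supNorm]
    refine ciSup_le (fun p => ?_)
    exact Tcal_pointwise_contraction (q := q) hG₁ hG₂ hC0 hC p.1.2 p.2.1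

end SYK
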